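/- Every consistent first-order theory in a countable signature has a model whose domain is a set, together with a full satisfaction relation (Henkin completeness theorem, formulated so as to be provable without the axiom of infinity by taking the model's individuals to be terms of an expanded language). -/

import Mathlib

open FirstOrder FirstOrder.Language

namespace PaperSat

variable {L : Language} {α : Type*}

/-- A formula in context: a bounded formula together with its number of bound variables. -/
abbrev Fml (L : Language) (α : Type*) : Type _ := Σ n, L.BoundedFormula α n

/-- `Sub φ ψ` means that `φ` is a subformula (or subexpression) of `ψ`. -/
inductive Sub {L : Language} {α : Type*} : Fml L α → Fml L α → Prop
  | refl (φ : Fml L α) : Sub φ φ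
  | impLeft {φ : Fml L α} {n : ℕ} (f g : L.BoundedFormula α n) :
      Sub φ ⟨n, f⟩ → Sub φ ⟨n, f.imp g⟩
  | impRight {φ : Fml L α} {n : ℕ} (f g : L.BoundedFormula α n) :
      Sub φ ⟨n, g⟩ → Sub φ ⟨n, f.imp g⟩
  | allOf {φ : Fml L α} {n : ℕ} (f : L.BoundedFormula α (n + 1)) :
      Sub φ ⟨n + 1, f⟩ → Sub φ ⟨n, f.all⟩

/-- Membership in the subformula closure of a class `Φ` of formulas. -/
def InCl (Φ : Set (Fml L α)) (φ : Fml L α) : Prop := ∃ ψ ∈ Φ, Sub φ ψ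

variable (M : Type*) [L.Structure M]

/-- `IsSatRel M Φ T` says that `T` is a `Φ`-satisfaction relation for the structure `M`:
a relation on pairs consisting of a subformula of a member of `Φ` and an assignment,
satisfying the usual Tarskian recursion clauses. -/
def IsSatRel (Φ : Set (Fml L α))
    (T : ∀ n, L.BoundedFormula α n → (α → M) → (Fin n → M) → Prop) : Prop :=
  (∀ (n : ℕ) (v : α → M) (xs : Fin n → M), InCl Φ ⟨n, BoundedFormula.falsum⟩ →
      ¬ T n BoundedFormula.falsum v xs) ∧
  (∀ (n : ℕ) (t₁ t₂ : L.Term (α ⊕ Fin n)) (v : α → M) (xs : Fin n → M),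
      InCl Φ ⟨n, t₁.bdEqual t₂⟩ →
      (T n (t₁.bdEqual t₂) v xs ↔ t₁.realize (Sum.elim v xs) = t₂.realize (Sum.elim v xs))) ∧
  (∀ (n l : ℕ) (R : L.Relations l) (ts : Fin l → L.Term (α ⊕ Fin n)) (v : α → M)
      (xs : Fin n → M), InCl Φ ⟨n, BoundedFormula.rel R ts⟩ →
      (T n (BoundedFormula.rel R ts) v xs ↔
        Structure.RelMap R fun i => (ts i).realize (Sum.elim v xs))) ∧
  (∀ (n : ℕ) (f g : L.BoundedFormula α n) (v : α → M) (xs : Fin n → M),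
      InCl Φ ⟨n, f.imp g⟩ → (T n (f.imp g) v xs ↔ (T n f v xs → T n g v xs))) ∧
  (∀ (n : ℕ) (f : L.BoundedFormula α (n + 1)) (v : α → M) (xs : Fin n → M),
      InCl Φ ⟨n, f.all⟩ → (T n f.all v xs ↔ ∀ x : M, T (n + 1) f v (Fin.snoc xs x)))

end PaperSat

namespace PaperLK

open FirstOrder FirstOrder.Language

variable {L : Language}

/-- Instantiation of the bound variable of a formula with one extra bound variable
by a term with free variables in `ℕ`. -/
def inst1 (f : L.BoundedFormula ℕ 1) (t : L.Term ℕ) : L.Formula ℕ :=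
  f.toFormula.subst (Sum.elim Term.var fun _ => t)

/-- The equality formula between two terms, as a formula with free variables in `ℕ`. -/
def eqT (t u : L.Term ℕ) : L.Formula ℕ :=
  (t.relabel Sum.inl).bdEqual (u.relabel Sum.inl)

/-- Gentzen's sequent calculus `LK` for classical first-order logic, on sequents of formulas
with free variables in `ℕ`.  The boolean parameter `cut` controls whether the cut rule is
available (`LK false eq` is the cut-free calculus `LK⁻`), and the boolean parameter `eq`
controls whether the rules for the identity predicate are available (`eq = false` gives logic
without identity). -/
inductive LK (cut eq : Bool) : List (L.Formula ℕ) → List (L.Formula ℕ) → Prop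
  | ax (φ : L.Formula ℕ) : LK cut eq [φ] [φ]
  | falsumL : LK cut eq [⊥] []
  | wL {Γ Δ} (φ) : LK cut eq Γ Δ → LK cut eq (φ :: Γ) Δ
  | wR {Γ Δ} (φ) : LK cut eq Γ Δ → LK cut eq Γ (Δ ++ [φ])
  | cL {Γ Δ} {φ} : LK cut eq (φ :: φ :: Γ) Δ → LK cut eq (φ :: Γ) Δ
  | cR {Γ Δ} {φ} : LK cut eq Γ (Δ ++ [φ, φ]) → LK cut eq Γ (Δ ++ [φ])
  | eL {Γ₁ Γ₂ Δ} {φ ψ} : LK cut eq (Γ₁ ++ φ :: ψ :: Γ₂) Δ → LK cut eq (Γ₁ ++ ψ :: φ :: Γ₂) Δ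
  | eR {Γ Δ₁ Δ₂} {φ ψ} : LK cut eq Γ (Δ₁ ++ φ :: ψ :: Δ₂) → LK cut eq Γ (Δ₁ ++ ψ :: φ :: Δ₂)
  | impL {Γ Γ' Δ Δ'} {f g : L.Formula ℕ} :
      LK cut eq Γ (Δ ++ [f]) → LK cut eq (g :: Γ') Δ' →
      LK cut eq ((f.imp g) :: (Γ ++ Γ')) (Δ ++ Δ')
  | impR {Γ Δ} {f g : L.Formula ℕ} :
      LK cut eq (f :: Γ) (Δ ++ [g]) → LK cut eq Γ (Δ ++ [f.imp g])
  | allL {Γ Δ} {f : L.BoundedFormula ℕ 1} (t : L.Term ℕ) :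
      LK cut eq ((inst1 f t) :: Γ) Δ → LK cut eq ((BoundedFormula.all f) :: Γ) Δ
  | allR {Γ Δ} {f : L.BoundedFormula ℕ 1} (k : ℕ)
      (hfresh : ∀ ψ ∈ (BoundedFormula.all f) :: (Γ ++ Δ), k ∉ ψ.freeVarFinset) :
      LK cut eq Γ (Δ ++ [inst1 f (Term.var k)]) →
      LK cut eq Γ (Δ ++ [BoundedFormula.all f])
  | cut' {Γ Γ' Δ Δ'} {φ : L.Formula ℕ} (hc : cut = true) :
      LK cut eq Γ (Δ ++ [φ]) → LK cut eq (φ :: Γ') Δ' → LK cut eq (Γ ++ Γ') (Δ ++ Δ')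
  | eqRefl (he : eq = true) (t : L.Term ℕ) : LK cut eq [] [eqT t t]
  | eqSubst {Γ Δ} {f : L.BoundedFormula ℕ 1} (he : eq = true) (t u : L.Term ℕ) :
      LK cut eq Γ (Δ ++ [inst1 f t]) → LK cut eq ((eqT t u) :: Γ) (Δ ++ [inst1 f u])

/-- Provability of a formula from a theory (a class of formulas), via the full sequent
calculus (with cut and with the rules for identity). -/
def ThmOf (Θ : Set (L.Formula ℕ)) (σ : L.Formula ℕ) : Prop :=
  ∃ Γ : List (L.Formula ℕ), (∀ γ ∈ Γ, γ ∈ Θ) ∧ LK true true Γ [σ]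

/-- A formula is a sentence if it has no free variables. -/
def ClosedF (φ : L.Formula ℕ) : Prop := φ.freeVarFinset = ∅

/-- A theory is consistent if there is no sentence such that both it and its negation
are provable. -/
def ConsistentT (Θ : Set (L.Formula ℕ)) : Prop :=
  ¬ ∃ σ : L.Formula ℕ, ClosedF σ ∧ ThmOf Θ σ ∧ ThmOf Θ σ.not

/-- The class of formulas not containing the identity predicate. -/
inductive EqFree : ∀ {n : ℕ}, L.BoundedFormula ℕ n → Prop
  | falsum {n} : EqFree (n := n) BoundedFormula.falsum
  | rel {n l} (R : L.Relations l) (ts : Fin l → L.Term (ℕ ⊕ Fin n)) :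
      EqFree (BoundedFormula.rel R ts)
  | imp {n} {f g : L.BoundedFormula ℕ n} : EqFree f → EqFree g → EqFree (f.imp g)
  | all {n} {f : L.BoundedFormula ℕ (n + 1)} : EqFree f → EqFree (BoundedFormula.all f)

end PaperLK

namespace PaperLK

open FirstOrder FirstOrder.Language

variable {L : Language} {c e : Bool}

/-! ### Structural lemmas for LK -/

lemma LK.permL_aux {Δ Γ Γ' : List (L.Formula ℕ)} (h : Γ.Perm Γ') :
    ∀ pre : List (L.Formula ℕ), LK c e (pre ++ Γ) Δ → LK c e (pre ++ Γ') Δ := by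
  induction h with
  | nil => exact fun _ h => h
  | cons a p ih =>
    intro pre h
    have := ih (pre ++ [a]) (by simpa using h)
    simpa using this
  | swap x y l => exact fun pre h => LK.eL h
  | trans p q ih1 ih2 => exact fun pre h => ih2 pre (ih1 pre h)

lemma LK.permL {Γ Γ' Δ : List (L.Formula ℕ)} (h : LK c e Γ Δ) (p : Γ.Perm Γ') :
    LK c e Γ' Δ := by
  simpa using LK.permL_aux p [] (by simpa using h)

lemma LK.permR_aux {Γ Δ Δ' : List (L.Formula ℕ)} (h : Δ.Perm Δ') :
    ∀ pre : List (L.Formula ℕ), LK c e Γ (pre ++ Δ) → LK c e Γ (pre ++ Δ') := by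
  induction h with
  | nil => exact fun _ h => h
  | cons a p ih =>
    intro pre h
    have := ih (pre ++ [a]) (by simpa using h)
    simpa using this
  | swap x y l => exact fun pre h => LK.eR h
  | trans p q ih1 ih2 => exact fun pre h => ih2 pre (ih1 pre h)

lemma LK.permR {Γ Δ Δ' : List (L.Formula ℕ)} (h : LK c e Γ Δ) (p : Δ.Perm Δ') :
    LK c e Γ Δ' := by
  simpa using LK.permR_aux p [] (by simpa using h)

lemma LK.wL_many {Γ Δ : List (L.Formula ℕ)} (h : LK c e Γ Δ) :
    ∀ pre, LK c e (pre ++ Γ) Δ := by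
  intro pre
  induction pre with
  | nil => exact h
  | cons a t ih => exact LK.wL a ih

lemma LK.wR_many {Γ Δ : List (L.Formula ℕ)} (h : LK c e Γ Δ) :
    ∀ post, LK c e Γ (Δ ++ post) := by
  intro post
  induction post using List.reverseRecOn with
  | nil => simpa using h
  | append_singleton p a ih => rw [← List.append_assoc]; exact LK.wR a ih

lemma LK.monoL_aux {Δ : List (L.Formula ℕ)} :
    ∀ (Γ Γ' : List (L.Formula ℕ)), LK c e (Γ' ++ Γ) Δ → (∀ x ∈ Γ, x ∈ Γ') → LK c e Γ' Δ := by
  intro Γ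
  induction Γ with
  | nil => intro Γ' h _; simpa using h
  | cons a t ih =>
    intro Γ' h hs
    obtain ⟨A, B, rfl⟩ := List.append_of_mem (hs a (by simp))
    have p1 : ((A ++ a :: B) ++ a :: t).Perm (a :: a :: ((A ++ B) ++ t)) := by
      classical
      refine List.perm_iff_count.2 fun x => ?_
      simp [List.count_append, List.count_cons]
      omega
    have h2 := LK.cL ((h.permL p1))
    have p2 : (a :: ((A ++ B) ++ t)).Perm ((A ++ a :: B) ++ t) := by
      classical
      refine List.perm_iff_count.2 fun x => ?_
      simp [List.count_append, List.count_cons]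
      try omega
    refine ih (A ++ a :: B) (h2.permL p2) ?_
    intro x hx
    exact hs x (by simp [hx])

lemma LK.monoL {Γ Γ' Δ : List (L.Formula ℕ)} (h : LK c e Γ Δ)
    (hs : ∀ x ∈ Γ, x ∈ Γ') : LK c e Γ' Δ :=
  LK.monoL_aux Γ Γ' (h.wL_many Γ') hs

lemma LK.monoR_aux {Γ : List (L.Formula ℕ)} :
    ∀ (Δ Δ' : List (L.Formula ℕ)), LK c e Γ (Δ ++ Δ') → (∀ x ∈ Δ, x ∈ Δ') → LK c e Γ Δ' := by
  intro Δ
  induction Δ using List.reverseRecOn with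
  | nil => intro Δ' h _; simpa using h
  | append_singleton D a ih =>
    intro Δ' h hs
    obtain ⟨A, B, rfl⟩ := List.append_of_mem (hs a (by simp))
    have p1 : ((D ++ [a]) ++ (A ++ a :: B)).Perm ((D ++ (A ++ B)) ++ [a, a]) := by
      classical
      refine List.perm_iff_count.2 fun x => ?_
      simp [List.count_append, List.count_cons]
      omega
    have h2 := LK.cR ((h.permR p1))
    have p2 : ((D ++ (A ++ B)) ++ [a]).Perm (D ++ (A ++ a :: B)) := by
      classical
      refine List.perm_iff_count.2 fun x => ?_
      simp [List.count_append, List.count_cons]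
      try omega
    refine ih (A ++ a :: B) (h2.permR p2) ?_
    intro x hx
    exact hs x (by simp [hx])

lemma LK.monoR {Γ Δ Δ' : List (L.Formula ℕ)} (h : LK c e Γ Δ)
    (hs : ∀ x ∈ Δ, x ∈ Δ') : LK c e Γ Δ' :=
  LK.monoR_aux Δ Δ' (h.wR_many Δ') hs

lemma LK.mono {Γ Γ' Δ Δ' : List (L.Formula ℕ)} (h : LK c e Γ Δ)
    (hl : ∀ x ∈ Γ, x ∈ Γ') (hr : ∀ x ∈ Δ, x ∈ Δ') : LK c e Γ' Δ' :=
  (h.monoL hl).monoR hr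

/-! ### Derived rules and provability -/

lemma LK.mp {f g : L.Formula ℕ} : LK c e [f.imp g, f] [g] := by
  have h1 : LK c e [f] ([] ++ [f]) := by simpa using LK.ax (cut:=c) (eq:=e) f
  have h2 : LK c e (g :: []) [g] := LK.ax g
  simpa using LK.impL h1 h2

lemma LK.bot_elim {φ : L.Formula ℕ} : LK c e [(⊥ : L.Formula ℕ)] [φ] := by
  simpa using LK.wR (cut:=c) (eq:=e) (Γ:=[(⊥ : L.Formula ℕ)]) (Δ:=[]) φ LK.falsumL

lemma LK.dne {φ : L.Formula ℕ} : LK c e [φ.not.not] [φ] := by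
  have h1 : LK c e (φ :: []) ([φ] ++ [(⊥ : L.Formula ℕ)]) := LK.wR _ (LK.ax φ)
  have h2 : LK c e [] ([φ] ++ [φ.not]) := by
    simpa [BoundedFormula.not] using LK.impR h1
  have h3 : LK c e ((⊥ : L.Formula ℕ) :: []) [] := LK.falsumL
  have h4 := LK.impL h2 h3
  simpa [BoundedFormula.not] using h4

lemma ThmOf.of_mem {Θ : Set (L.Formula ℕ)} {σ : L.Formula ℕ} (h : σ ∈ Θ) : ThmOf Θ σ :=
  ⟨[σ], by simpa using h, LK.ax σ⟩

lemma ThmOf.mono {Θ Θ' : Set (L.Formula ℕ)} {σ : L.Formula ℕ} (h : ThmOf Θ σ)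
    (hs : Θ ⊆ Θ') : ThmOf Θ' σ := by
  obtain ⟨Γ, hΓ, hL⟩ := h
  exact ⟨Γ, fun γ hγ => hs (hΓ γ hγ), hL⟩

lemma ThmOf.cut {Θ : Set (L.Formula ℕ)} {σ τ : L.Formula ℕ} (h1 : ThmOf Θ σ)
    (h2 : LK true true [σ] [τ]) : ThmOf Θ τ := by
  obtain ⟨Γ, hΓ, hL⟩ := h1
  refine ⟨Γ, hΓ, ?_⟩
  have hL' : LK true true Γ ([] ++ [σ]) := by simpa using hL
  simpa using LK.cut' rfl hL' h2

lemma ThmOf.mp {Θ : Set (L.Formula ℕ)} {f g : L.Formula ℕ} (h1 : ThmOf Θ (f.imp g))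
    (h2 : ThmOf Θ f) : ThmOf Θ g := by
  obtain ⟨Γ₁, hΓ₁, hL₁⟩ := h1
  obtain ⟨Γ₂, hΓ₂, hL₂⟩ := h2
  have hL₁' : LK true true Γ₁ ([] ++ [f.imp g]) := by simpa using hL₁
  have c1 : LK true true (Γ₁ ++ [f]) ([] ++ [g]) := LK.cut' rfl hL₁' LK.mp
  have c2 : LK true true (f :: Γ₁) [g] := c1.monoL (by intro x hx; simp at hx ⊢; tauto)
  have hL₂' : LK true true Γ₂ ([] ++ [f]) := by simpa using hL₂
  have c3 : LK true true (Γ₂ ++ Γ₁) ([] ++ [g]) := LK.cut' rfl hL₂' c2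
  refine ⟨Γ₂ ++ Γ₁, ?_, by simpa using c3⟩
  intro γ hγ
  rcases List.mem_append.1 hγ with h | h
  exacts [hΓ₂ γ h, hΓ₁ γ h]

lemma ThmOf.bot_of_not {Θ : Set (L.Formula ℕ)} {σ : L.Formula ℕ} (h1 : ThmOf Θ σ)
    (h2 : ThmOf Θ σ.not) : ThmOf Θ (⊥ : L.Formula ℕ) :=
  ThmOf.mp (f := σ) h2 h1

lemma ThmOf.dne {Θ : Set (L.Formula ℕ)} {σ : L.Formula ℕ} (h : ThmOf Θ σ.not.not) :
    ThmOf Θ σ :=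
  h.cut LK.dne

/-- Consistency as non-provability of `⊥`. -/
def ConS (S : Set (L.Formula ℕ)) : Prop := ¬ ThmOf S (⊥ : L.Formula ℕ)

lemma ConsistentT.conS {Θ : Set (L.Formula ℕ)} (h : ConsistentT Θ) : ConS Θ := by
  intro hbot
  refine h ⟨⊥, by simp [ClosedF, Bot.bot], hbot, ?_⟩
  refine ⟨[], by simp, ?_⟩
  have h1 : LK true true ((⊥ : L.Formula ℕ) :: []) ([] ++ [(⊥ : L.Formula ℕ)]) := by
    simpa using LK.bot_elim (φ := (⊥ : L.Formula ℕ))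
  simpa [BoundedFormula.not] using LK.impR h1

lemma ConS.mono {S S' : Set (L.Formula ℕ)} (h : ConS S) (hs : S' ⊆ S) : ConS S' :=
  fun hbot => h (hbot.mono hs)

lemma thm_not_of_insert_bot {S : Set (L.Formula ℕ)} {φ : L.Formula ℕ}
    (h : ThmOf (insert φ S) (⊥ : L.Formula ℕ)) : ThmOf S φ.not := by
  classical
  obtain ⟨Γ, hΓ, hL⟩ := h
  refine ⟨Γ.filter (fun x => decide (x ∈ S)), ?_, ?_⟩
  · intro γ hγ
    simpa using (of_decide_eq_true (List.mem_filter.1 hγ).2)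
  · have h2 : LK true true (φ :: Γ.filter (fun x => decide (x ∈ S)))
        ([] ++ [(⊥ : L.Formula ℕ)]) := by
      refine LK.monoL (by simpa using hL) ?_
      intro x hx
      rcases hΓ x hx with rfl | hmem
      · simp
      · simp only [List.mem_cons]
        exact Or.inr (List.mem_filter.2 ⟨hx, by simpa using hmem⟩)
    simpa [BoundedFormula.not] using LK.impR h2

lemma insert_bot_of_thm_not {S : Set (L.Formula ℕ)} {φ : L.Formula ℕ}
    (h : ThmOf S φ.not) : ThmOf (insert φ S) (⊥ : L.Formula ℕ) := by
  obtain ⟨Γ, hΓ, hL⟩ := h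
  have hL' : LK true true Γ ([] ++ [φ.not]) := by simpa using hL
  have hmp : LK true true (φ.not :: [φ]) [(⊥ : L.Formula ℕ)] := by
    simpa [BoundedFormula.not] using LK.mp (c := true) (e := true) (f := φ) (g := (⊥ : L.Formula ℕ))
  have := LK.cut' rfl hL' hmp
  refine ⟨Γ ++ [φ], ?_, by simpa using this⟩
  intro γ hγ
  rcases List.mem_append.1 hγ with h | h
  · exact Set.mem_insert_of_mem _ (hΓ γ h)
  · simp at h; simp [h]

lemma ConS.either {S : Set (L.Formula ℕ)} (h : ConS S) (φ : L.Formula ℕ) :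
    ConS (insert φ S) ∨ ConS (insert φ.not S) := by
  by_contra hc
  push_neg at hc
  obtain ⟨h1, h2⟩ := hc
  rw [ConS, not_not] at h1 h2
  exact h ((thm_not_of_insert_bot h1).bot_of_not (thm_not_of_insert_bot h2))

lemma witness_con {S : Set (L.Formula ℕ)} {f : L.BoundedFormula ℕ 1} {k : ℕ}
    (hS : ∀ ψ ∈ S, k ∉ ψ.freeVarFinset) (hf : k ∉ (BoundedFormula.all f).freeVarFinset)
    (hcon : ConS (insert (BoundedFormula.all f).not S)) :
    ConS (insert (inst1 f (Term.var k)).not (insert (BoundedFormula.all f).not S)) := by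
  intro hbot
  have h1 : ThmOf (insert (BoundedFormula.all f).not S) (inst1 f (Term.var k)).not.not :=
    thm_not_of_insert_bot hbot
  obtain ⟨Γ, hΓ, hL⟩ := h1.dne
  have hfresh : ∀ ψ ∈ (BoundedFormula.all f) :: (Γ ++ []), k ∉ ψ.freeVarFinset := by
    intro ψ hψ
    rcases List.mem_cons.1 (by simpa using hψ) with rfl | hψ'
    · exact hf
    · rcases hΓ ψ hψ' with rfl | hmem
      · simpa [BoundedFormula.not] using hf
      · exact hS ψ hmem
  have h3 : LK true true Γ ([] ++ [BoundedFormula.all f]) :=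
    LK.allR k hfresh (by simpa using hL)
  have h4 : ThmOf (insert (BoundedFormula.all f).not S) (BoundedFormula.all f) :=
    ⟨Γ, hΓ, by simpa using h3⟩
  exact hcon (h4.bot_of_not (ThmOf.of_mem (Set.mem_insert _ _)))

end PaperLK

namespace PaperLK

open FirstOrder FirstOrder.Language

variable {L : Language}

/-! ### The Lindenbaum–Henkin construction -/

/-- A variable fresh for all formulas in a list. -/
def freshVar (l : List (L.Formula ℕ)) : ℕ :=
  (l.map (fun ψ => ψ.freeVarFinset.sup id + 1)).foldr max 0

lemma freshVar_not_mem {l : List (L.Formula ℕ)} {ψ : L.Formula ℕ} (hψ : ψ ∈ l) :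
    freshVar l ∉ ψ.freeVarFinset := by
  intro hv
  have h1 : freshVar l < ψ.freeVarFinset.sup id + 1 :=
    Nat.lt_succ_of_le (Finset.le_sup (f := id) hv)
  have h2 : ψ.freeVarFinset.sup id + 1 ≤ freshVar l := by
    clear h1 hv
    induction l with
    | nil => simp at hψ
    | cons a t ih =>
      rcases List.mem_cons.1 hψ with rfl | h
      · exact le_max_left _ _
      · exact le_trans (ih h) (le_max_right _ _)
  omega

variable (Θ : Set (L.Formula ℕ)) (e : ℕ → L.Formula ℕ)

open Classical in
/-- The formulas added at one step of the Lindenbaum–Henkin construction. -/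
noncomputable def next (φ : L.Formula ℕ) (prev : List (L.Formula ℕ)) : List (L.Formula ℕ) :=
  if ConS (insert φ (Θ ∪ {ψ | ψ ∈ prev})) then
    if h : ∃ f : L.BoundedFormula ℕ 1, φ = (BoundedFormula.all f).not then
      [φ, (inst1 h.choose (Term.var (freshVar (φ :: prev)))).not]
    else [φ]
  else [φ.not]

/-- The finite stages of the Lindenbaum–Henkin construction. -/
noncomputable def stage : ℕ → List (L.Formula ℕ)
  | 0 => []
  | n + 1 => stage n ++ next Θ (e n) (stage n)

/-- The Lindenbaum–Henkin completion of a theory. -/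
def Lind : Set (L.Formula ℕ) := Θ ∪ {ψ | ∃ n, ψ ∈ stage Θ e n}

lemma mem_stage_mono {m n : ℕ} (h : m ≤ n) {ψ : L.Formula ℕ}
    (hψ : ψ ∈ stage Θ e m) : ψ ∈ stage Θ e n := by
  induction n, h using Nat.le_induction with
  | base => exact hψ
  | succ n hn ih => exact List.mem_append.2 (Or.inl ih)

lemma con_stage (hΘc : ∀ θ ∈ Θ, ClosedF θ) (hcon : ConS Θ) :
    ∀ n, ConS (Θ ∪ {ψ | ψ ∈ stage Θ e n})
  | 0 => by
    have h0 : (Θ ∪ {ψ | ψ ∈ stage Θ e 0}) = Θ := by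
      ext x; simp [stage]
    rw [h0]; exact hcon
  | n + 1 => by
    have ih := con_stage hΘc hcon n
    have hstage : stage Θ e (n + 1) = stage Θ e n ++ next Θ (e n) (stage Θ e n) := rfl
    simp only [hstage]
    unfold next
    split_ifs with hC hW
    · have hfe : e n = (BoundedFormula.all hW.choose).not := hW.choose_spec
      set f := hW.choose with hfdef
      set k := freshVar (e n :: stage Θ e n) with hkdef
      have hset : Θ ∪ {ψ | ψ ∈ stage Θ e n ++ [e n, (inst1 f (Term.var k)).not]} =
          insert (inst1 f (Term.var k)).not
            (insert ((BoundedFormula.all f).not) (Θ ∪ {ψ | ψ ∈ stage Θ e n})) := by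
      -- note `e n = (all f).not`
        ext x
        simp only [Set.mem_union, Set.mem_setOf_eq, List.mem_append, List.mem_cons,
          List.mem_singleton, Set.mem_insert_iff, ← hfe]
        tauto
      rw [hset]
      refine witness_con ?_ ?_ ?_
      · intro ψ hψ
        rcases hψ with hθ | hprev
        · have := hΘc ψ hθ
          rw [ClosedF] at this
          simp [this]
        · exact freshVar_not_mem (List.mem_cons_of_mem _ hprev)
      · have hfs : (BoundedFormula.all f).freeVarFinset = (e n).freeVarFinset := by
          rw [hfe]; simp [BoundedFormula.not]
        rw [hfs]
        exact freshVar_not_mem List.mem_cons_self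
      · rw [← hfe]; exact hC
    · have hset : Θ ∪ {ψ | ψ ∈ stage Θ e n ++ [e n]} =
          insert (e n) (Θ ∪ {ψ | ψ ∈ stage Θ e n}) := by
        ext x
        simp only [Set.mem_union, Set.mem_setOf_eq, List.mem_append, List.mem_singleton,
          Set.mem_insert_iff]
        tauto
      rw [hset]; exact hC
    · have hset : Θ ∪ {ψ | ψ ∈ stage Θ e n ++ [(e n).not]} =
          insert (e n).not (Θ ∪ {ψ | ψ ∈ stage Θ e n}) := by
        ext x
        simp only [Set.mem_union, Set.mem_setOf_eq, List.mem_append, List.mem_singleton,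
          Set.mem_insert_iff]
        tauto
      rw [hset]
      rcases ih.either (e n) with h | h
      · exact absurd h hC
      · exact h

lemma mem_or_not_mem_stage (n : ℕ) :
    e n ∈ stage Θ e (n + 1) ∨ (e n).not ∈ stage Θ e (n + 1) := by
  have hstage : stage Θ e (n + 1) = stage Θ e n ++ next Θ (e n) (stage Θ e n) := rfl
  rw [hstage]
  unfold next
  split_ifs <;> simp

lemma not_mem_stage_of_neg {n : ℕ}
    (hC : ¬ ConS (insert (e n) (Θ ∪ {ψ | ψ ∈ stage Θ e n}))) :
    (e n).not ∈ stage Θ e (n + 1) := by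
  have hstage : stage Θ e (n + 1) = stage Θ e n ++ next Θ (e n) (stage Θ e n) := rfl
  rw [hstage]
  unfold next
  rw [if_neg hC]
  simp

lemma next_henkin {n : ℕ} {f : L.BoundedFormula ℕ 1}
    (hfe : e n = (BoundedFormula.all f).not)
    (hC : ConS (insert (e n) (Θ ∪ {ψ | ψ ∈ stage Θ e n}))) :
    ∃ k, (inst1 f (Term.var k)).not ∈ stage Θ e (n + 1) := by
  have hstage : stage Θ e (n + 1) = stage Θ e n ++ next Θ (e n) (stage Θ e n) := rfl
  rw [hstage]
  unfold next
  rw [if_pos hC]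
  have hW : ∃ f' : L.BoundedFormula ℕ 1, e n = (BoundedFormula.all f').not := ⟨f, hfe⟩
  rw [dif_pos hW]
  have hch : hW.choose = f := by
    have h2 : (BoundedFormula.all hW.choose).not = (BoundedFormula.all f).not := by
      rw [← hW.choose_spec, hfe]
    simpa [BoundedFormula.not] using h2
  rw [hch]
  exact ⟨freshVar (e n :: stage Θ e n), by simp⟩

lemma subset_lind : Θ ⊆ Lind Θ e := Set.subset_union_left

lemma lind_con (hΘc : ∀ θ ∈ Θ, ClosedF θ) (hcon : ConS Θ) : ConS (Lind Θ e) := by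
  rintro ⟨Γ, hΓ, hL⟩
  have key : ∀ Γ' : List (L.Formula ℕ), (∀ γ ∈ Γ', γ ∈ Lind Θ e) →
      ∃ N, ∀ γ ∈ Γ', γ ∈ Θ ∪ {ψ | ψ ∈ stage Θ e N} := by
    intro Γ'
    induction Γ' with
    | nil => exact fun _ => ⟨0, by simp⟩
    | cons a t ih =>
      intro hmem
      obtain ⟨N, hN⟩ := ih (fun γ hγ => hmem γ (List.mem_cons_of_mem _ hγ))
      rcases hmem a List.mem_cons_self with hθ | ⟨m, hm⟩
      · refine ⟨N, ?_⟩
        intro γ hγ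
        rcases List.mem_cons.1 hγ with rfl | h
        · exact Or.inl hθ
        · exact hN γ h
      · refine ⟨max N m, ?_⟩
        intro γ hγ
        rcases List.mem_cons.1 hγ with rfl | h
        · exact Or.inr (mem_stage_mono Θ e (le_max_right _ _) hm)
        · rcases hN γ h with h' | h'
          · exact Or.inl h'
          · exact Or.inr (mem_stage_mono Θ e (le_max_left _ _) h')
  obtain ⟨N, hN⟩ := key Γ hΓ
  exact con_stage Θ e hΘc hcon N ⟨Γ, hN, hL⟩

lemma lind_compl (he : Function.Surjective e) (φ : L.Formula ℕ) :
    φ ∈ Lind Θ e ∨ φ.not ∈ Lind Θ e := by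
  obtain ⟨n, rfl⟩ := he φ
  rcases mem_or_not_mem_stage Θ e n with h | h
  · exact Or.inl (Or.inr ⟨n + 1, h⟩)
  · exact Or.inr (Or.inr ⟨n + 1, h⟩)

lemma lind_henkin (hΘc : ∀ θ ∈ Θ, ClosedF θ) (hcon : ConS Θ) (he : Function.Surjective e)
    {f : L.BoundedFormula ℕ 1} (h : (BoundedFormula.all f).not ∈ Lind Θ e) :
    ∃ k, (inst1 f (Term.var k)).not ∈ Lind Θ e := by
  obtain ⟨n, hn⟩ := he (BoundedFormula.all f).not
  by_cases hC : ConS (insert (e n) (Θ ∪ {ψ | ψ ∈ stage Θ e n}))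
  · obtain ⟨k, hk⟩ := next_henkin Θ e hn hC
    exact ⟨k, Or.inr ⟨n + 1, hk⟩⟩
  · exfalso
    have h1 : (e n).not ∈ Lind Θ e := Or.inr ⟨n + 1, not_mem_stage_of_neg Θ e hC⟩
    rw [hn] at h1
    exact lind_con Θ e hΘc hcon
      ((ThmOf.of_mem h).bot_of_not (ThmOf.of_mem h1))

/-- A maximal consistent Henkin-complete set of formulas. -/
structure MaxCon (Δ : Set (L.Formula ℕ)) : Prop where
  con : ConS Δ
  compl : ∀ φ : L.Formula ℕ, φ ∈ Δ ∨ φ.not ∈ Δ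
  henkin : ∀ f : L.BoundedFormula ℕ 1, (BoundedFormula.all f).not ∈ Δ →
    ∃ k : ℕ, (inst1 f (Term.var k)).not ∈ Δ

lemma exists_maxCon [Countable (Σ l, L.Functions l)] [Countable (Σ l, L.Relations l)]
    (hΘc : ∀ θ ∈ Θ, ClosedF θ) (hcon : ConS Θ) :
    ∃ Δ : Set (L.Formula ℕ), Θ ⊆ Δ ∧ MaxCon Δ := by
  have hc1 : Countable (Σ n, L.BoundedFormula ℕ n) :=
    (BoundedFormula.listEncode_sigma_injective (L := L) (α := ℕ)).countable
  have hc2 : Countable (L.Formula ℕ) :=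
    (show Function.Injective (Sigma.mk 0 : L.Formula ℕ → Σ n, L.BoundedFormula ℕ n) from
      sigma_mk_injective).countable
  obtain ⟨e, he⟩ := exists_surjective_nat (L.Formula ℕ)
  refine ⟨Lind Θ e, subset_lind Θ e, ?_, ?_, ?_⟩
  · exact lind_con Θ e hΘc hcon
  · exact lind_compl Θ e he
  · exact fun f h => lind_henkin Θ e hΘc hcon he h

/-! ### Properties of maximal consistent sets -/

variable {Δ : Set (L.Formula ℕ)}

lemma MaxCon.thm_mem (h : MaxCon Δ) {φ : L.Formula ℕ} (ht : ThmOf Δ φ) : φ ∈ Δ := by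
  rcases h.compl φ with hm | hm
  · exact hm
  · exact absurd (ht.bot_of_not (ThmOf.of_mem hm)) h.con

lemma MaxCon.not_both (h : MaxCon Δ) {φ : L.Formula ℕ} (h1 : φ ∈ Δ) (h2 : φ.not ∈ Δ) : False :=
  h.con ((ThmOf.of_mem h1).bot_of_not (ThmOf.of_mem h2))

lemma MaxCon.not_mem_iff (h : MaxCon Δ) {φ : L.Formula ℕ} : φ.not ∈ Δ ↔ φ ∉ Δ := by
  constructor
  · exact fun h2 h1 => h.not_both h1 h2
  · intro h1
    rcases h.compl φ with hm | hm
    · exact absurd hm h1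
    · exact hm

lemma MaxCon.bot_not_mem (h : MaxCon Δ) : (⊥ : L.Formula ℕ) ∉ Δ :=
  fun hb => h.con (ThmOf.of_mem hb)

lemma MaxCon.imp_mem_iff (h : MaxCon Δ) {f g : L.Formula ℕ} :
    f.imp g ∈ Δ ↔ (f ∈ Δ → g ∈ Δ) := by
  constructor
  · intro h1 h2
    exact h.thm_mem ((ThmOf.of_mem h1).mp (ThmOf.of_mem h2))
  · intro h1
    by_cases hf : f ∈ Δ
    · -- from g ∈ Δ
      have hg := h1 hf
      refine h.thm_mem ((ThmOf.of_mem hg).cut ?_)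
      have hax : LK true true (f :: [g]) ([] ++ [g]) := by
        refine LK.monoL (LK.ax g) ?_
        intro x hx; simp at hx; simp [hx]
      simpa using LK.impR hax
    · have hnf : f.not ∈ Δ := h.not_mem_iff.2 hf
      refine h.thm_mem ((ThmOf.of_mem hnf).cut ?_)
      -- [f.not] ⊢ [f.imp g]
      have hmp : LK true true (f.not :: [f]) ([] ++ [(⊥ : L.Formula ℕ)]) := by
        simpa [BoundedFormula.not] using
          LK.mp (c := true) (e := true) (f := f) (g := (⊥ : L.Formula ℕ))
      have hbe : LK true true ((⊥ : L.Formula ℕ) :: []) [g] := LK.bot_elim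
      have hcut := LK.cut' rfl hmp hbe
      -- LK (f.not :: [f] ++ []) ([] ++ [g])
      have hfg : LK true true (f :: [f.not]) ([] ++ [g]) := by
        refine LK.monoL (by simpa using hcut) ?_
        intro x hx; simp at hx ⊢; tauto
      simpa using LK.impR hfg

lemma MaxCon.all_mem_iff (h : MaxCon Δ) {g : L.BoundedFormula ℕ 1} :
    BoundedFormula.all g ∈ Δ ↔ ∀ t : L.Term ℕ, inst1 g t ∈ Δ := by
  constructor
  · intro h1 t
    refine h.thm_mem ((ThmOf.of_mem h1).cut ?_)
    exact LK.allL t (LK.ax _)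
  · intro h1
    by_contra hna
    have hn : (BoundedFormula.all g).not ∈ Δ := h.not_mem_iff.2 hna
    obtain ⟨k, hk⟩ := h.henkin g hn
    exact h.not_both (h1 (Term.var k)) hk

end PaperLK

namespace PaperLK

open FirstOrder FirstOrder.Language

variable {L : Language}

/-! ### Substitution computations -/

lemma subst_relabel' {α β γ : Type*} (g : α → β) (σ : β → L.Term γ) (t : L.Term α) :
    (t.relabel g).subst σ = t.subst (σ ∘ g) := by
  induction t with
  | var => rfl
  | func f ts ih => simp only [Term.relabel, Term.subst]; exact congrArg _ (funext fun i => ih i)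

lemma relabel_subst' {α β γ : Type*} (σ : α → L.Term β) (g : β → γ) (t : L.Term α) :
    (t.subst σ).relabel g = t.subst (fun a => (σ a).relabel g) := by
  induction t with
  | var => rfl
  | func f ts ih => simp only [Term.relabel, Term.subst]; exact congrArg _ (funext fun i => ih i)

/-- Instantiation of the bound variable in a term with one bound variable. -/
def sub1 (a : L.Term (ℕ ⊕ Fin 1)) (t : L.Term ℕ) : L.Term ℕ :=
  a.subst (Sum.elim Term.var fun _ => t)

lemma sub1_key (a : L.Term (ℕ ⊕ Fin 1)) (t : L.Term ℕ) :
    (a.relabel Sum.inl).subst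
      (Sum.elim (Term.relabel Sum.inl ∘ (Sum.elim Term.var fun _ => t)) (Term.var ∘ Sum.inr)) =
    (sub1 a t).relabel (Sum.inl : ℕ → ℕ ⊕ Fin 0) := by
  rw [subst_relabel', sub1, relabel_subst']
  exact congrArg (Term.subst a) (funext fun x => by cases x <;> rfl)

lemma sub1_relabel_inl (a : L.Term ℕ) (t : L.Term ℕ) :
    sub1 (a.relabel Sum.inl) t = a := by
  rw [sub1, subst_relabel']
  have : (Sum.elim Term.var (fun _ => t) ∘ (Sum.inl : ℕ → ℕ ⊕ Fin 1)) = Term.var := rfl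
  rw [this]
  induction a with
  | var => rfl
  | func f ts ih => simp only [Term.subst]; exact congrArg _ (funext fun i => ih i)

lemma inst1_equal (a b : L.Term (ℕ ⊕ Fin 1)) (t : L.Term ℕ) :
    inst1 (Term.bdEqual a b) t = eqT (sub1 a t) (sub1 b t) :=
  congrArg₂ BoundedFormula.equal (sub1_key a t) (sub1_key b t)

lemma inst1_rel {l : ℕ} (R : L.Relations l) (ts : Fin l → L.Term (ℕ ⊕ Fin 1)) (t : L.Term ℕ) :
    inst1 (BoundedFormula.rel R ts) t = R.formula (fun i => sub1 (ts i) t) :=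
  congrArg (BoundedFormula.rel R) (funext fun i => sub1_key (ts i) t)

/-- Forgetting the (nonexistent) bound variables of a term. -/
def down (u : L.Term (ℕ ⊕ Fin 0)) : L.Term ℕ :=
  u.relabel (Sum.elim id Fin.elim0)

lemma subst0_key (u : L.Term (ℕ ⊕ Fin 0)) (v : ℕ → L.Term ℕ) :
    u.subst (Sum.elim (Term.relabel Sum.inl ∘ v) (Term.var ∘ Sum.inr)) =
      ((down u).subst v).relabel (Sum.inl : ℕ → ℕ ⊕ Fin 0) := by
  rw [down, subst_relabel', relabel_subst']
  exact congrArg (Term.subst u) (funext fun x => by cases x with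
    | inl i => rfl
    | inr j => exact j.elim0)

lemma subst_equal0 (t₁ t₂ : L.Term (ℕ ⊕ Fin 0)) (v : ℕ → L.Term ℕ) :
    (BoundedFormula.equal t₁ t₂ : L.BoundedFormula ℕ 0).subst v =
      eqT ((down t₁).subst v) ((down t₂).subst v) :=
  congrArg₂ BoundedFormula.equal (subst0_key t₁ v) (subst0_key t₂ v)

lemma subst_rel0 {l : ℕ} (R : L.Relations l) (ts : Fin l → L.Term (ℕ ⊕ Fin 0))
    (v : ℕ → L.Term ℕ) :
    (BoundedFormula.rel R ts : L.BoundedFormula ℕ 0).subst v =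
      R.formula (fun i => (down (ts i)).subst v) :=
  congrArg (BoundedFormula.rel R) (funext fun i => subst0_key (ts i) v)

lemma subst_imp' {n : ℕ} (f g : L.BoundedFormula ℕ n) (v : ℕ → L.Term ℕ) :
    (f.imp g).subst v = (f.subst v).imp (g.subst v) := rfl

lemma subst_all' {n : ℕ} (f : L.BoundedFormula ℕ (n + 1)) (v : ℕ → L.Term ℕ) :
    (BoundedFormula.all f).subst v = (f.subst v).all := rfl

lemma subst_var_term {α : Type*} {k : ℕ} (t : L.Term (α ⊕ Fin k)) :
    t.subst (Sum.elim (Term.relabel Sum.inl ∘ Term.var) (Term.var ∘ Sum.inr)) = t := by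
  induction t with
  | var x => cases x <;> rfl
  | func f ts ih => simp only [Term.subst]; exact congrArg _ (funext fun i => ih i)

lemma subst_var_id : ∀ {n : ℕ} (φ : L.BoundedFormula ℕ n), φ.subst Term.var = φ
  | _, BoundedFormula.falsum => rfl
  | _, BoundedFormula.equal t₁ t₂ =>
    congrArg₂ BoundedFormula.equal (subst_var_term t₁) (subst_var_term t₂)
  | _, BoundedFormula.rel R ts =>
    congrArg (BoundedFormula.rel R) (funext fun i => subst_var_term (ts i))
  | _, BoundedFormula.imp f g => by
    rw [subst_imp', subst_var_id f, subst_var_id g]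
  | _, BoundedFormula.all f => by
    rw [subst_all', subst_var_id f]

/-! ### The term model -/

variable {Δ : Set (L.Formula ℕ)}

/-- Provable equality of terms. -/
def termRel (Δ : Set (L.Formula ℕ)) (t u : L.Term ℕ) : Prop := eqT t u ∈ Δ

lemma termRel_refl (hΔ : MaxCon Δ) (t : L.Term ℕ) : termRel Δ t t :=
  hΔ.thm_mem ⟨[], by simp, LK.eqRefl rfl t⟩

lemma termRel_symm (hΔ : MaxCon Δ) {t u : L.Term ℕ} (h : termRel Δ t u) : termRel Δ u t := by
  set f : L.BoundedFormula ℕ 1 :=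
    Term.bdEqual (Term.var (Sum.inr 0)) (t.relabel Sum.inl) with hf
  have hft : inst1 f t = eqT t t := by
    rw [hf, inst1_equal, sub1_relabel_inl]; rfl
  have hfu : inst1 f u = eqT u t := by
    rw [hf, inst1_equal, sub1_relabel_inl]; rfl
  have h1 : LK true true [] ([] ++ [inst1 f t]) := by
    rw [hft]; simpa using LK.eqRefl (cut := true) rfl t
  have h2 := LK.eqSubst (f := f) rfl t u h1
  rw [hfu] at h2
  exact hΔ.thm_mem ⟨[eqT t u], by simp; exact h, by simpa using h2⟩

lemma termRel_trans (hΔ : MaxCon Δ) {t u w : L.Term ℕ} (h1 : termRel Δ t u)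
    (h2 : termRel Δ u w) : termRel Δ t w := by
  set f : L.BoundedFormula ℕ 1 :=
    Term.bdEqual (t.relabel Sum.inl) (Term.var (Sum.inr 0)) with hf
  have hfu : inst1 f u = eqT t u := by
    rw [hf, inst1_equal, sub1_relabel_inl]; rfl
  have hfw : inst1 f w = eqT t w := by
    rw [hf, inst1_equal, sub1_relabel_inl]; rfl
  have hax : LK true true [eqT t u] ([] ++ [inst1 f u]) := by
    rw [hfu]; simpa using LK.ax (cut := true) (eq := true) (eqT t u)
  have h3 := LK.eqSubst (f := f) rfl u w hax
  rw [hfw] at h3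
  refine hΔ.thm_mem ⟨[eqT u w, eqT t u], ?_, by simpa using h3⟩
  rintro γ hγ
  rcases List.mem_cons.1 hγ with rfl | hγ2
  · exact h2
  rcases List.mem_cons.1 hγ2 with rfl | hγ3
  · exact h1
  · exact absurd hγ3 List.not_mem_nil

lemma termRel_func_update (hΔ : MaxCon Δ) {l : ℕ} (F : L.Functions l)
    (u : Fin l → L.Term ℕ) (i : Fin l) {t t' : L.Term ℕ} (h : termRel Δ t t') :
    termRel Δ (Term.func F (Function.update u i t)) (Term.func F (Function.update u i t')) := by
  classical
  set p : L.Term (ℕ ⊕ Fin 1) :=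
    Term.func F (fun j => if j = i then Term.var (Sum.inr 0) else (u j).relabel Sum.inl) with hp
  set c : L.Term ℕ := Term.func F (Function.update u i t) with hc
  set f : L.BoundedFormula ℕ 1 := Term.bdEqual p (c.relabel Sum.inl) with hf
  have hsub : ∀ s : L.Term ℕ, sub1 p s = Term.func F (Function.update u i s) := by
    intro s
    rw [hp, sub1]
    show Term.func F _ = _
    refine congrArg _ (funext fun j => ?_)
    rw [Function.update_apply]
    by_cases hj : j = i
    · simp [hj]
    · simp only [if_neg hj]
      exact sub1_relabel_inl (u j) s
  have hft : inst1 f t = eqT c c := by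
    rw [hf, inst1_equal, sub1_relabel_inl, hsub, ← hc]
  have hft' : inst1 f t' = eqT (Term.func F (Function.update u i t')) c := by
    rw [hf, inst1_equal, sub1_relabel_inl, hsub]
  have h1 : LK true true [] ([] ++ [inst1 f t]) := by
    rw [hft]; simpa using LK.eqRefl (cut := true) rfl c
  have h2 := LK.eqSubst (f := f) rfl t t' h1
  rw [hft'] at h2
  have h3 : termRel Δ (Term.func F (Function.update u i t')) c :=
    hΔ.thm_mem ⟨[eqT t t'], by simp; exact h, by simpa using h2⟩
  exact termRel_symm hΔ h3

lemma relF_update (hΔ : MaxCon Δ) {l : ℕ} (R : L.Relations l)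
    (u : Fin l → L.Term ℕ) (i : Fin l) {t t' : L.Term ℕ} (h : termRel Δ t t')
    (hm : R.formula (Function.update u i t) ∈ Δ) :
    R.formula (Function.update u i t') ∈ Δ := by
  classical
  set p : Fin l → L.Term (ℕ ⊕ Fin 1) :=
    fun j => if j = i then Term.var (Sum.inr 0) else (u j).relabel Sum.inl with hp
  set f : L.BoundedFormula ℕ 1 := BoundedFormula.rel R p with hf
  have hsub : ∀ s : L.Term ℕ, inst1 f s = R.formula (Function.update u i s) := by
    intro s
    rw [hf, inst1_rel]
    refine congrArg _ (funext fun j => ?_)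
    rw [hp, Function.update_apply]
    by_cases hj : j = i
    · simp [hj, sub1]
    · simp only [if_neg hj]
      exact sub1_relabel_inl (u j) s
  have hax : LK true true [R.formula (Function.update u i t)] ([] ++ [inst1 f t]) := by
    rw [hsub]; simpa using LK.ax (cut := true) (eq := true) _
  have h2 := LK.eqSubst (f := f) rfl t t' hax
  rw [hsub] at h2
  refine hΔ.thm_mem ⟨[eqT t t', R.formula (Function.update u i t)], ?_, by simpa using h2⟩
  rintro γ hγ
  rcases List.mem_cons.1 hγ with rfl | hγ2
  · exact h
  rcases List.mem_cons.1 hγ2 with rfl | hγ3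
  · exact hm
  · exact absurd hγ3 List.not_mem_nil

lemma chain_update (hΔ : MaxCon Δ) {l : ℕ} {P : (Fin l → L.Term ℕ) → Prop}
    (h1 : ∀ (u : Fin l → L.Term ℕ) (i : Fin l) (t t' : L.Term ℕ), termRel Δ t t' →
      P (Function.update u i t) → P (Function.update u i t'))
    {v w : Fin l → L.Term ℕ} (hvw : ∀ i, termRel Δ (v i) (w i)) (hv : P v) : P w := by
  classical
  have key : ∀ j : ℕ, j ≤ l → P (fun i => if (i : ℕ) < j then w i else v i) := by
    intro j
    induction j with
    | zero =>
      intro _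
      have hvv : (fun i : Fin l => if (i : ℕ) < 0 then w i else v i) = v := by
        funext i; simp
      rw [hvv]; exact hv
    | succ j ih =>
      intro hj
      have hjl : j < l := hj
      set i : Fin l := ⟨j, hjl⟩ with hi
      have e1 : (fun i' : Fin l => if (i' : ℕ) < j then w i' else v i') =
          Function.update (fun i' : Fin l => if (i' : ℕ) < j then w i' else v i') i (v i) := by
        funext x
        rw [Function.update_apply]
        by_cases hx : x = i
        · subst hx; simp [hi]
        · simp [hx]
      have e2 : (fun i' : Fin l => if (i' : ℕ) < j + 1 then w i' else v i') =
          Function.update (fun i' : Fin l => if (i' : ℕ) < j then w i' else v i') i (w i) := by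
        funext x
        rw [Function.update_apply]
        by_cases hx : x = i
        · subst hx; simp [hi]
        · have hxj : (x : ℕ) ≠ j := fun hc => hx (Fin.ext hc)
          have hiff : ((x : ℕ) < j + 1) ↔ ((x : ℕ) < j) := by omega
          simp only [if_neg hx, hiff]
      rw [e2]
      exact h1 _ i (v i) (w i) (hvw i) (by rw [← e1]; exact ih (le_of_lt hjl))
  have hfin := key l le_rfl
  have hw : (fun i : Fin l => if (i : ℕ) < l then w i else v i) = w := by
    funext i; simp [i.isLt]
  rwa [hw] at hfin

lemma termRel_func_congr (hΔ : MaxCon Δ) {l : ℕ} (F : L.Functions l)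
    {v w : Fin l → L.Term ℕ} (h : ∀ i, termRel Δ (v i) (w i)) :
    termRel Δ (Term.func F v) (Term.func F w) := by
  refine chain_update hΔ (P := fun x => termRel Δ (Term.func F v) (Term.func F x))
    ?_ h (termRel_refl hΔ _)
  intro u i t t' htt' hP
  exact termRel_trans hΔ hP (termRel_func_update hΔ F u i htt')

lemma relF_congr (hΔ : MaxCon Δ) {l : ℕ} (R : L.Relations l)
    {v w : Fin l → L.Term ℕ} (h : ∀ i, termRel Δ (v i) (w i))
    (hv : R.formula v ∈ Δ) : R.formula w ∈ Δ :=
  chain_update hΔ (P := fun x => R.formula x ∈ Δ)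
    (fun u i t t' htt' hP => relF_update hΔ R u i htt' hP) h hv

/-- The setoid of provable equality on terms. -/
def TSetoid (hΔ : MaxCon Δ) : Setoid (L.Term ℕ) :=
  ⟨termRel Δ, fun t => termRel_refl hΔ t, fun h => termRel_symm hΔ h,
    fun h h' => termRel_trans hΔ h h'⟩

/-- The term model. -/
abbrev TModel (hΔ : MaxCon Δ) := Quotient (TSetoid hΔ)

noncomputable instance tStructure (hΔ : MaxCon Δ) : L.Structure (TModel hΔ) where
  funMap {l} F v :=
    Quotient.lift (fun u : Fin l → L.Term ℕ => (⟦Term.func F u⟧ : TModel hΔ))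
      (fun a b hab => by
        have hab' : ∀ i, termRel Δ (a i) (b i) := hab
        exact Quotient.sound (termRel_func_congr hΔ F hab'))
      (Quotient.finChoice v)
  RelMap {l} R v :=
    Quotient.lift (fun u : Fin l → L.Term ℕ => R.formula u ∈ Δ)
      (fun a b hab => by
        have hab' : ∀ i, termRel Δ (a i) (b i) := hab
        exact propext ⟨fun hv => relF_congr hΔ R hab' hv,
          fun hv => relF_congr hΔ R (fun i => termRel_symm hΔ (hab' i)) hv⟩)
      (Quotient.finChoice v)

lemma funMap_mk (hΔ : MaxCon Δ) {l : ℕ} (F : L.Functions l) (u : Fin l → L.Term ℕ) :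
    Structure.funMap (M := TModel hΔ) F (fun i => (⟦u i⟧ : TModel hΔ)) = ⟦Term.func F u⟧ := by
  show Quotient.lift _ _ (Quotient.finChoice fun i => (⟦u i⟧ : TModel hΔ)) = _
  rw [Quotient.finChoice_eq]
  rfl

lemma relMap_mk (hΔ : MaxCon Δ) {l : ℕ} (R : L.Relations l) (u : Fin l → L.Term ℕ) :
    Structure.RelMap (M := TModel hΔ) R (fun i => (⟦u i⟧ : TModel hΔ)) ↔ R.formula u ∈ Δ := by
  show Quotient.lift _ _ (Quotient.finChoice fun i => (⟦u i⟧ : TModel hΔ)) ↔ _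
  rw [Quotient.finChoice_eq]
  exact Iff.rfl

lemma mk_eq_mk (hΔ : MaxCon Δ) {t u : L.Term ℕ} :
    (⟦t⟧ : TModel hΔ) = ⟦u⟧ ↔ eqT t u ∈ Δ :=
  ⟨fun h => Quotient.exact h, fun h => Quotient.sound h⟩

lemma realize_term_canon (hΔ : MaxCon Δ) (t : L.Term ℕ) :
    Term.realize (M := TModel hΔ) (fun i => (⟦Term.var i⟧ : TModel hΔ)) t = ⟦t⟧ := by
  induction t with
  | var => rfl
  | func F ts ih =>
    show Structure.funMap F _ = _
    have : (fun i => Term.realize (M := TModel hΔ) (fun i => (⟦Term.var i⟧ : TModel hΔ)) (ts i)) =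
        fun i => (⟦ts i⟧ : TModel hΔ) := funext fun i => ih i
    rw [this, funMap_mk]

end PaperLK

namespace PaperLK

open FirstOrder FirstOrder.Language

variable {L : Language} {α : Type*}

/-! ### Depth of formulas -/

/-- The depth of a bounded formula. -/
def dep : ∀ {n : ℕ}, L.BoundedFormula α n → ℕ
  | _, BoundedFormula.falsum => 0
  | _, BoundedFormula.equal _ _ => 0
  | _, BoundedFormula.rel _ _ => 0
  | _, BoundedFormula.imp f g => max (dep f) (dep g) + 1
  | _, BoundedFormula.all f => dep f + 1

lemma dep_castLE : ∀ {m n : ℕ} (h : m ≤ n) (φ : L.BoundedFormula α m),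
    dep (φ.castLE h) = dep φ
  | _, _, _, BoundedFormula.falsum => rfl
  | _, _, _, BoundedFormula.equal _ _ => rfl
  | _, _, _, BoundedFormula.rel _ _ => rfl
  | _, _, h, BoundedFormula.imp f g => by
    simp only [BoundedFormula.castLE, dep, dep_castLE h f, dep_castLE h g]
  | _, _, h, BoundedFormula.all f => by
    simp only [BoundedFormula.castLE, dep, dep_castLE _ f]

lemma dep_mapTermRel {β : Type*} {g : ℕ → ℕ}
    (ft : ∀ n, L.Term (α ⊕ Fin n) → L.Term (β ⊕ Fin (g n)))
    (fr : ∀ n, L.Relations n → L.Relations n)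
    (h : ∀ n, L.BoundedFormula β (g (n + 1)) → L.BoundedFormula β (g n + 1))
    (hh : ∀ (n : ℕ) (ψ : L.BoundedFormula β (g (n + 1))), dep (h n ψ) = dep ψ) :
    ∀ {n : ℕ} (φ : L.BoundedFormula α n), dep (φ.mapTermRel ft fr h) = dep φ
  | _, BoundedFormula.falsum => rfl
  | _, BoundedFormula.equal _ _ => rfl
  | _, BoundedFormula.rel _ _ => rfl
  | _, BoundedFormula.imp f g' => by
    simp only [BoundedFormula.mapTermRel, dep,
      dep_mapTermRel ft fr h hh f, dep_mapTermRel ft fr h hh g']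
  | _, BoundedFormula.all f => by
    simp only [BoundedFormula.mapTermRel, dep, hh, dep_mapTermRel ft fr h hh f]

lemma dep_subst {β : Type*} {n : ℕ} (φ : L.BoundedFormula α n) (v : α → L.Term β) :
    dep (φ.subst v) = dep φ := by
  unfold BoundedFormula.subst
  exact dep_mapTermRel (g := fun n => n) _ _ (fun _ => id) (fun _ _ => rfl) φ

lemma dep_relabel {β : Type*} {n k : ℕ} (g : α → β ⊕ Fin n) (φ : L.BoundedFormula α k) :
    dep (φ.relabel g) = dep φ := by
  unfold BoundedFormula.relabel
  exact dep_mapTermRel _ _ _ (fun _ ψ => dep_castLE _ ψ) φ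

lemma dep_toFormula : ∀ {n : ℕ} (φ : L.BoundedFormula α n), dep φ.toFormula = dep φ
  | _, BoundedFormula.falsum => rfl
  | _, BoundedFormula.equal _ _ => rfl
  | _, BoundedFormula.rel _ _ => rfl
  | _, BoundedFormula.imp f g => by
    simp only [BoundedFormula.toFormula, dep, dep_toFormula f, dep_toFormula g]
  | _, BoundedFormula.all f => by
    simp only [BoundedFormula.toFormula, dep, dep_relabel, dep_toFormula f]

lemma dep_inst1 (f : L.BoundedFormula ℕ 1) (t : L.Term ℕ) : dep (inst1 f t) = dep f := by
  show dep (BoundedFormula.subst _ _) = _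
  rw [dep_subst, dep_toFormula]

/-! ### The truth lemma -/

variable {Δ : Set (L.Formula ℕ)}

lemma realize_term_v (hΔ : MaxCon Δ) (v : ℕ → L.Term ℕ) (t : L.Term ℕ) :
    Term.realize (M := TModel hΔ) (fun i => (⟦v i⟧ : TModel hΔ)) t = ⟦t.subst v⟧ := by
  have h2 : (fun i => (⟦v i⟧ : TModel hΔ)) =
      fun a => Term.realize (fun i => (⟦Term.var i⟧ : TModel hΔ)) (v a) :=
    funext fun a => (realize_term_canon hΔ (v a)).symm
  rw [h2, ← Term.realize_subst, realize_term_canon]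

lemma realize_down (M : Type*) [L.Structure M] (w : ℕ → M) (xs : Fin 0 → M)
    (t : L.Term (ℕ ⊕ Fin 0)) :
    t.realize (Sum.elim w xs) = (down t).realize w := by
  rw [down, Term.realize_relabel]
  congr 1
  funext x
  cases x with
  | inl i => rfl
  | inr j => exact j.elim0

lemma truth_equal (hΔ : MaxCon Δ) (t₁ t₂ : L.Term (ℕ ⊕ Fin 0)) (v : ℕ → L.Term ℕ) :
    (Formula.Realize (M := TModel hΔ) (BoundedFormula.equal t₁ t₂)
      (fun i => (⟦v i⟧ : TModel hΔ)) ↔ (BoundedFormula.equal t₁ t₂).subst v ∈ Δ) := by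
  rw [subst_equal0]
  show (t₁.realize _ = t₂.realize _) ↔ _
  rw [realize_down, realize_down, realize_term_v hΔ, realize_term_v hΔ, mk_eq_mk hΔ]

lemma truth_rel (hΔ : MaxCon Δ) {l : ℕ} (R : L.Relations l)
    (ts : Fin l → L.Term (ℕ ⊕ Fin 0)) (v : ℕ → L.Term ℕ) :
    (Formula.Realize (M := TModel hΔ) (BoundedFormula.rel R ts)
      (fun i => (⟦v i⟧ : TModel hΔ)) ↔ (BoundedFormula.rel R ts).subst v ∈ Δ) := by
  rw [subst_rel0]
  show Structure.RelMap R _ ↔ _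
  rw [← relMap_mk hΔ R (fun i => (down (ts i)).subst v)]
  congr! 1
  funext i
  rw [realize_down, realize_term_v hΔ]

lemma realize_subst_bf (hΔ : MaxCon Δ) {k : ℕ} (f : L.BoundedFormula ℕ k) (v : ℕ → L.Term ℕ)
    (xs : Fin k → TModel hΔ) :
    BoundedFormula.Realize (M := TModel hΔ) (f.subst v)
      (fun i => (⟦Term.var i⟧ : TModel hΔ)) xs ↔
    BoundedFormula.Realize (M := TModel hΔ) f (fun i => (⟦v i⟧ : TModel hΔ)) xs := by
  rw [BoundedFormula.realize_subst]
  apply iff_of_eq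
  congr 1
  funext a
  exact realize_term_canon hΔ (v a)

lemma realize_inst1 (hΔ : MaxCon Δ) (g : L.BoundedFormula ℕ 1) (t : L.Term ℕ) :
    Formula.Realize (M := TModel hΔ) (inst1 g t) (fun i => (⟦Term.var i⟧ : TModel hΔ)) ↔
    BoundedFormula.Realize (M := TModel hΔ) g (fun i => (⟦Term.var i⟧ : TModel hΔ))
      (fun _ => (⟦t⟧ : TModel hΔ)) := by
  have h3 := BoundedFormula.realize_toFormula (M := TModel hΔ) g
    (fun a => Term.realize (M := TModel hΔ) (fun i => (⟦Term.var i⟧ : TModel hΔ))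
      (Sum.elim Term.var (fun _ => t) a))
  have h4 : BoundedFormula.Realize (M := TModel hΔ) g
      ((fun a : ℕ ⊕ Fin 1 => Term.realize (M := TModel hΔ) (fun i => (⟦Term.var i⟧ : TModel hΔ))
        (Sum.elim Term.var (fun _ => t) a)) ∘ (Sum.inl : ℕ → ℕ ⊕ Fin 1))
      ((fun a : ℕ ⊕ Fin 1 => Term.realize (M := TModel hΔ) (fun i => (⟦Term.var i⟧ : TModel hΔ))
        (Sum.elim Term.var (fun _ => t) a)) ∘ (Sum.inr : Fin 1 → ℕ ⊕ Fin 1)) ↔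
      BoundedFormula.Realize (M := TModel hΔ) g (fun i => (⟦Term.var i⟧ : TModel hΔ))
        (fun _ => (⟦t⟧ : TModel hΔ)) := by
    apply iff_of_eq
    congr 1
    all_goals
      funext x
      simp only [Function.comp_apply]
      first
      | exact realize_term_canon hΔ t
      | rfl
  unfold inst1 Formula.Realize
  rw [BoundedFormula.realize_subst]
  exact h3.trans h4

lemma truth_lemma (hΔ : MaxCon Δ) :
    ∀ (d : ℕ) (φ : L.Formula ℕ), dep φ ≤ d → ∀ v : ℕ → L.Term ℕ,
      (φ.Realize (fun i => (⟦v i⟧ : TModel hΔ)) ↔ φ.subst v ∈ Δ) := by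
  intro d
  induction d with
  | zero =>
    intro φ hd v
    cases φ with
    | falsum => exact iff_of_false (fun h => h) hΔ.bot_not_mem
    | equal t₁ t₂ => exact truth_equal hΔ t₁ t₂ v
    | rel R ts => exact truth_rel hΔ R ts v
    | imp f g => exact absurd hd (by simp [dep])
    | all f => exact absurd hd (by simp [dep])
  | succ d ih =>
    intro φ hd v
    cases φ with
    | falsum => exact iff_of_false (fun h => h) hΔ.bot_not_mem
    | equal t₁ t₂ => exact truth_equal hΔ t₁ t₂ v
    | rel R ts => exact truth_rel hΔ R ts v
    | imp f g =>
      have hdf : dep f ≤ d := by simp [dep] at hd; omega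
      have hdg : dep g ≤ d := by simp [dep] at hd; omega
      rw [subst_imp', Formula.realize_imp, ih f hdf v, ih g hdg v, hΔ.imp_mem_iff]
    | all f =>
      have hdf : dep f ≤ d := by simp [dep] at hd; omega
      rw [subst_all']
      have hsnoc : ∀ (xs : Fin 0 → TModel hΔ) (x : TModel hΔ),
          (Fin.snoc xs x : Fin 1 → TModel hΔ) = fun _ => x := by
        intro xs x
        funext i
        have hi : i = Fin.last 0 := Fin.ext (by omega)
        rw [hi, Fin.snoc_last]
      have hkey : ∀ t : L.Term ℕ,
          (BoundedFormula.Realize (M := TModel hΔ) f (fun i => (⟦v i⟧ : TModel hΔ))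
            (fun _ => (⟦t⟧ : TModel hΔ)) ↔ inst1 (f.subst v) t ∈ Δ) := by
        intro t
        have hih := ih (inst1 (f.subst v) t)
          (by rw [dep_inst1, dep_subst]; exact hdf) Term.var
        rw [subst_var_id] at hih
        calc BoundedFormula.Realize (M := TModel hΔ) f (fun i => (⟦v i⟧ : TModel hΔ))
              (fun _ => (⟦t⟧ : TModel hΔ))
            ↔ BoundedFormula.Realize (M := TModel hΔ) (f.subst v)
              (fun i => (⟦Term.var i⟧ : TModel hΔ)) (fun _ => (⟦t⟧ : TModel hΔ)) :=
              (realize_subst_bf hΔ f v _).symm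
          _ ↔ Formula.Realize (M := TModel hΔ) (inst1 (f.subst v) t)
              (fun i => (⟦Term.var i⟧ : TModel hΔ)) := (realize_inst1 hΔ (f.subst v) t).symm
          _ ↔ inst1 (f.subst v) t ∈ Δ := hih
      unfold Formula.Realize
      rw [BoundedFormula.realize_all]
      simp only [hsnoc]
      constructor
      · intro h
        rw [hΔ.all_mem_iff]
        intro t
        exact (hkey t).1 (h (⟦t⟧ : TModel hΔ))
      · intro h x
        obtain ⟨t, rfl⟩ := Quotient.exists_rep x
        exact (hkey t).2 (hΔ.all_mem_iff.1 h t)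

end PaperLK






namespace PaperLK

open FirstOrder FirstOrder.Language

variable {L : Language}

/-! ### Final assembly lemmas -/

lemma realize_closed_congr {M : Type*} [L.Structure M] {σ : L.Formula ℕ} (hσ : ClosedF σ)
    (v w : ℕ → M) (xs : Fin 0 → M) :
    BoundedFormula.Realize σ v xs ↔ BoundedFormula.Realize σ w xs := by
  classical
  have hsub : ↑σ.freeVarFinset ⊆ (∅ : Set ℕ) := by
    rw [ClosedF] at hσ; simp [hσ]
  have h1 := BoundedFormula.realize_restrictFreeVar' (M := M) (φ := σ) hsub (v := v) (xs := xs)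
  have h2 := BoundedFormula.realize_restrictFreeVar' (M := M) (φ := σ) hsub (v := w) (xs := xs)
  rw [← h1, ← h2]
  have he : (v ∘ (Subtype.val : (∅ : Set ℕ) → ℕ)) = (w ∘ (Subtype.val : (∅ : Set ℕ) → ℕ)) :=
    funext fun x => absurd x.2 (Set.notMem_empty _)
  rw [he]

lemma realize_xs_congr {M : Type*} [L.Structure M] (σ : L.Formula ℕ) (v : ℕ → M)
    (xs ys : Fin 0 → M) :
    BoundedFormula.Realize σ v xs ↔ BoundedFormula.Realize σ v ys := by
  rw [Subsingleton.elim xs ys]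

end PaperLK

namespace PaperSat

open FirstOrder FirstOrder.Language

lemma isSatRel_realize {L : Language} (M : Type*) [L.Structure M] :
    IsSatRel M Set.univ (fun n (φ : L.BoundedFormula ℕ n) v xs => φ.Realize v xs) := by
  refine ⟨?_, ?_, ?_, ?_, ?_⟩
  · exact fun n v xs _ h => h
  · exact fun n t₁ t₂ v xs _ => BoundedFormula.realize_bdEqual _ _
  · exact fun n l R ts v xs _ => BoundedFormula.realize_rel
  · exact fun n f g v xs _ => BoundedFormula.realize_imp
  · exact fun n f v xs _ => BoundedFormula.realize_all

end PaperSat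

namespace PaperSat

open PaperLK

/-- (Henkin completeness theorem.)  Every consistent first-order theory in a
countable signature has a model whose domain is a set, together with a full satisfaction
relation in which every sentence of the theory holds. -/
theorem consistent_theory_has_model (L : Language)
    [Countable (Σ l, L.Functions l)] [Countable (Σ l, L.Relations l)]
    (Θ : Set (L.Formula ℕ)) (hΘc : ∀ θ ∈ Θ, ClosedF θ) (hcon : ConsistentT Θ) :
    ∃ (M : Type) (_ : L.Structure M), Nonempty M ∧
      ∃ T : ∀ n, L.BoundedFormula ℕ n → (ℕ → M) → (Fin n → M) → Prop,
        IsSatRel M Set.univ T ∧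
        ∀ σ ∈ Θ, ∀ (v : ℕ → M) (xs : Fin 0 → M), T 0 σ v xs := by
  classical
  have hconS : ConS Θ := hcon.conS
  obtain ⟨Δ, hΘΔ, hΔ⟩ := exists_maxCon Θ hΘc hconS
  have htruth : ∀ σ ∈ Θ, Formula.Realize (M := TModel hΔ) σ
      (fun i => (⟦Term.var i⟧ : TModel hΔ)) := by
    intro σ hσ
    have h1 := truth_lemma hΔ (dep σ) σ le_rfl Term.var
    rw [subst_var_id] at h1
    exact h1.2 (hΘΔ hσ)
  haveI : Countable (L.Term ℕ) := inferInstance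
  haveI : Countable (TModel hΔ) := inferInstance
  obtain ⟨fi, hfi⟩ := Countable.exists_injective_nat (TModel hΔ)
  let e := Equiv.ofInjective fi hfi
  letI : L.Structure ↥(Set.range fi) := e.inducedStructure
  refine ⟨↥(Set.range fi), inferInstance, ⟨e (⟦Term.var 0⟧ : TModel hΔ)⟩,
    fun n φ v xs => BoundedFormula.Realize φ v xs, isSatRel_realize _, ?_⟩
  intro σ hσ w xs
  have h3 : BoundedFormula.Realize (M := TModel hΔ) σ (fun i => e.symm (w i))
      (fun j => e.symm (xs j)) := by
    have h4 : Formula.Realize (M := TModel hΔ) σ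
        (fun i => (⟦Term.var i⟧ : TModel hΔ)) := htruth σ hσ
    have h5 := realize_closed_congr (hΘc σ hσ) (fun i => e.symm (w i))
      (fun i => (⟦Term.var i⟧ : TModel hΔ)) (fun j => e.symm (xs j))
    rw [h5]
    exact (realize_xs_congr σ _ _ _).1 h4
  have h7 := (StrongHomClass.realize_boundedFormula (g := (Equiv.inducedStructureEquiv (L := L) e)) σ
      (v := fun i => e.symm (w i)) (xs := fun j => e.symm (xs j))).2 h3
  have h8 : (⇑((Equiv.inducedStructureEquiv (L := L) e)) ∘ fun i => e.symm (w i)) = w := by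
    funext i
    simp only [Function.comp_apply, Equiv.toFun_inducedStructureEquiv, Equiv.apply_symm_apply]
  have h9 : (⇑((Equiv.inducedStructureEquiv (L := L) e)) ∘ fun j => e.symm (xs j)) = xs := by
    funext j
    simp only [Function.comp_apply, Equiv.toFun_inducedStructureEquiv, Equiv.apply_symm_apply]
  rw [h8, h9] at h7
  exact h7

end PaperSat
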